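/- arXiv:0706.2343 — 3 statements merged into one kernel-verified Lean document; each statement's English description precedes it below -/
import Mathlib

section
/- Let d ≥ 1. The set of vectors μ = (μ_1, …, μ_d) ∈ ℂ^d for which the Diophantine condition fails — i.e., for which there do NOT exist C, ν > 0 such that |m·μ + l − μ_s| > C(|m| + l)^{−ν} for all l ∈ ℕ, all s ∈ {1, …, d}, and all m ∈ ℕ^d with |m| ≥ 2 — has Lebesgue measure zero in ℂ^d (identified with ℝ^{2d}). -/
open MeasureTheory Real Set Filter
open scoped ENNReal Topology


lemma tsum_pi_fin (g : ℕ → ℝ≥0∞) : ∀ n, ∑' m : Fin n → ℕ, ∏ i, g (m i) = (∑' k, g k) ^ n := by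
  intro n
  induction n with
  | zero => simp [tsum_eq_single (default : Fin 0 → ℕ) (fun m hm => absurd (Subsingleton.elim m default) hm)]
  | succ n ih =>
    rw [← (Fin.consEquiv (fun _ : Fin (n+1) => ℕ)).tsum_eq]
    have : ∀ c : ℕ × (Fin n → ℕ),
        (∏ i, g ((Fin.consEquiv (fun _ : Fin (n+1) => ℕ)) c i)) = g c.1 * ∏ i, g (c.2 i) := by
      intro c
      rw [Fin.prod_univ_succ]
      simp [Fin.consEquiv]
    simp_rw [this]
    rw [ENNReal.tsum_prod (f := fun x (f : Fin n → ℕ) => g x * ∏ i, g (f i)), pow_succ]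
    simp_rw [ENNReal.tsum_mul_left]
    rw [ih, ENNReal.tsum_mul_right]
    ring

lemma volume_slab (n : ℕ) (a : Fin (n+1) → ℂ) (j : Fin (n+1)) (ha : 1 ≤ ‖a j‖)
    (c : ℂ) {ε R : ℝ} (hε : 0 ≤ ε) (hR : 0 ≤ R) :
    volume {μ : Fin (n+1) → ℂ | (∀ i, ‖μ i‖ ≤ R) ∧
        ‖(∑ i, a i * μ i) + c‖ ≤ ε}
      ≤ ENNReal.ofReal (π * ε^2) * (ENNReal.ofReal (π * R^2)) ^ n := by
  have haj : a j ≠ 0 := by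
    intro h; rw [h] at ha; simp at ha; linarith
  set e := MeasurableEquiv.piFinSuccAbove (fun _ : Fin (n+1) => ℂ) j with he
  set t : Set (ℂ × (Fin n → ℂ)) :=
    {p | ‖a j * p.1 + ((∑ k, a (j.succAbove k) * p.2 k) + c)‖ ≤ ε ∧
      ∀ k, ‖p.2 k‖ ≤ R} with ht_def
  have hmeas1 : Measurable fun p : ℂ × (Fin n → ℂ) =>
      ‖a j * p.1 + ((∑ k, a (j.succAbove k) * p.2 k) + c)‖ := by
    apply continuous_norm.measurable.comp
    fun_prop
  have hmeas2 : ∀ k : Fin n, Measurable fun p : ℂ × (Fin n → ℂ) => ‖p.2 k‖ := by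
    intro k
    apply continuous_norm.measurable.comp
    fun_prop
  have hboxmeas : MeasurableSet {y : Fin n → ℂ | ∀ k, ‖y k‖ ≤ R} := by
    rw [Set.setOf_forall]
    exact MeasurableSet.iInter fun k => measurableSet_le
      (continuous_norm.measurable.comp (measurable_pi_apply k)) measurable_const
  have ht : MeasurableSet t := by
    apply MeasurableSet.inter
    · exact measurableSet_le hmeas1 measurable_const
    · show MeasurableSet {p : ℂ × (Fin n → ℂ) | ∀ k, ‖p.2 k‖ ≤ R}
      rw [Set.setOf_forall]
      exact MeasurableSet.iInter fun k => measurableSet_le (hmeas2 k) measurable_const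
  have happ : ∀ μ : Fin (n+1) → ℂ, e μ = (μ j, fun k => μ (j.succAbove k)) := fun μ => rfl
  have hsub : {μ : Fin (n+1) → ℂ | (∀ i, ‖μ i‖ ≤ R) ∧
        ‖(∑ i, a i * μ i) + c‖ ≤ ε} ⊆ e ⁻¹' t := by
    intro μ ⟨hbox, habs⟩
    simp only [Set.mem_preimage, happ, ht_def, Set.mem_setOf_eq]
    refine ⟨?_, fun k => hbox _⟩
    rw [← add_assoc, ← Fin.sum_univ_succAbove (fun i => a i * μ i) j]
    exact habs
  calc volume {μ : Fin (n+1) → ℂ | (∀ i, ‖μ i‖ ≤ R) ∧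
        ‖(∑ i, a i * μ i) + c‖ ≤ ε}
      ≤ volume (e ⁻¹' t) := measure_mono hsub
    _ = ((volume : Measure ℂ).prod (Measure.pi fun _ : Fin n => (volume : Measure ℂ))) t := by
        exact (measurePreserving_piFinSuccAbove (fun _ : Fin (n+1) => (volume : Measure ℂ)) j).measure_preimage ht.nullMeasurableSet
    _ = ∫⁻ y, volume ((fun x => (x, y)) ⁻¹' t) ∂(Measure.pi fun _ : Fin n => (volume : Measure ℂ)) := by
        rw [Measure.prod_apply_symm ht]
    _ ≤ ∫⁻ y, Set.indicator {y : Fin n → ℂ | ∀ k, ‖y k‖ ≤ R}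
          (fun _ => ENNReal.ofReal (π * ε^2)) y ∂(Measure.pi fun _ : Fin n => (volume : Measure ℂ)) := by
        apply lintegral_mono
        intro y
        by_cases hy : ∀ k, ‖y k‖ ≤ R
        · rw [Set.indicator_of_mem (show y ∈ {y : Fin n → ℂ | ∀ k, ‖y k‖ ≤ R} from hy)]
          have hsub2 : ((fun x => (x, y)) ⁻¹' t) ⊆
              Metric.closedBall (-(((∑ k, a (j.succAbove k) * y k) + c) / a j)) ε := by
            intro x hx
            have hx1 := hx.1
            rw [Metric.mem_closedBall, dist_eq_norm]
            have : x - -(((∑ k, a (j.succAbove k) * y k) + c) / a j)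
                = (a j * x + ((∑ k, a (j.succAbove k) * y k) + c)) / a j := by
              field_simp; ring
            rw [this, norm_div]
            calc ‖a j * x + ((∑ k, a (j.succAbove k) * y k) + c)‖ / ‖a j‖
                ≤ ‖a j * x + ((∑ k, a (j.succAbove k) * y k) + c)‖ / 1 := by
                  apply div_le_div_of_nonneg_left (norm_nonneg _) one_pos ha
              _ ≤ ε := by rw [div_one]; exact hx1
          calc volume ((fun x => (x, y)) ⁻¹' t)
              ≤ volume (Metric.closedBall (-(((∑ k, a (j.succAbove k) * y k) + c) / a j)) ε) :=
                measure_mono hsub2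
            _ = ENNReal.ofReal ε ^ 2 * NNReal.pi := Complex.volume_closedBall _ _
            _ = ENNReal.ofReal (π * ε^2) := by
                rw [← ENNReal.ofReal_pow hε, ← ENNReal.ofReal_coe_nnreal, NNReal.coe_real_pi,
                  ← ENNReal.ofReal_mul (by positivity), mul_comm]
        · have : ((fun x => (x, y)) ⁻¹' t) = ∅ := by
            ext x; simp only [Set.mem_preimage, ht_def, Set.mem_setOf_eq, Set.mem_empty_iff_false,
              iff_false, not_and]
            intro _; exact hy
          rw [Set.indicator_of_notMem (show y ∉ {y : Fin n → ℂ | ∀ k, ‖y k‖ ≤ R} from hy)]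
          simp [this]
    _ = ENNReal.ofReal (π * ε^2) * (ENNReal.ofReal (π * R^2)) ^ n := by
        rw [lintegral_indicator]
        · have hbox_eq : {y : Fin n → ℂ | ∀ k, ‖y k‖ ≤ R}
              = Set.pi Set.univ (fun _ : Fin n => Metric.closedBall (0:ℂ) R) := by
            ext y
            simp [Metric.mem_closedBall, dist_zero_right]
          rw [lintegral_const, Measure.restrict_apply_univ, hbox_eq, Measure.pi_pi]
          congr 1
          rw [Finset.prod_const]
          congr 1
          rw [Complex.volume_closedBall, ← ENNReal.ofReal_pow hR, ← ENNReal.ofReal_coe_nnreal,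
            NNReal.coe_real_pi, ← ENNReal.ofReal_mul (by positivity), mul_comm]
          simp
        · exact hboxmeas


-- key real inequality
lemma key_ineq (n : ℕ) (l : ℕ) (m : Fin (n+1) → ℕ) :
    ((((∑ i, m i : ℕ):ℝ) + (l:ℝ)) ^ (-((n:ℝ)+2))) ^ 2
      ≤ 4^(n+2) * (∏ i, 1/((m i:ℝ)+1)^2) * (1/((l:ℝ)+1)^2) := by
  set T : ℝ := (((∑ i, m i : ℕ):ℝ) + (l:ℝ)) with hT
  have hT0 : 0 ≤ T := by positivity
  rcases Nat.eq_zero_or_pos (∑ i, m i + l) with h0 | h1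
  · obtain ⟨hm0, hl0⟩ := Nat.add_eq_zero.mp h0
    have hT0' : T = 0 := by rw [hT, hm0, hl0]; simp
    rw [hT0', Real.zero_rpow (neg_ne_zero.mpr (by positivity : ((n:ℝ)+2) ≠ 0)), zero_pow (two_ne_zero)]
    positivity
  · have hT1 : (1:ℝ) ≤ T := by
      rw [hT]
      have : (1:ℝ) ≤ ((∑ i, m i + l : ℕ):ℝ) := by exact_mod_cast h1
      push_cast at this ⊢; linarith
    have hTpos : (0:ℝ) < T := by linarith
    have hrw : T ^ (-((n:ℝ)+2)) = (T ^ (n+2 : ℕ))⁻¹ := by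
      rw [← Real.rpow_natCast T (n+2), ← Real.rpow_neg hT0]
      norm_num
    rw [hrw]
    set P : ℝ := (∏ i, ((m i:ℝ)+1)) * ((l:ℝ)+1) with hPdef
    have hP : P ≤ 2^(n+2) * T^(n+2) := by
      have hfac : ∀ i, (m i:ℝ) + 1 ≤ 2 * T := by
        intro i
        have h1 : (m i : ℝ) ≤ T := by
          rw [hT]
          have : (m i : ℕ) ≤ ∑ i, m i := Finset.single_le_sum (fun _ _ => Nat.zero_le _) (Finset.mem_univ i)
          have := (Nat.cast_le (α := ℝ)).mpr this
          have hl : (0:ℝ) ≤ (l:ℝ) := Nat.cast_nonneg l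
          linarith
        linarith
      have hl2 : (l:ℝ) + 1 ≤ 2 * T := by
        have : (l:ℝ) ≤ T := by
          rw [hT]; have : (0:ℝ) ≤ ((∑ i, m i : ℕ):ℝ) := Nat.cast_nonneg _; linarith
        linarith
      calc P ≤ (∏ i : Fin (n+1), (2*T)) * (2*T) := by
            apply mul_le_mul (Finset.prod_le_prod (fun i _ => by positivity) (fun i _ => hfac i)) hl2 (by positivity)
            positivity
        _ = (2*T)^(n+2) := by rw [Finset.prod_const, Finset.card_univ]; simp [pow_succ]
        _ = 2^(n+2) * T^(n+2) := by rw [mul_pow]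
    have hPpos : (0:ℝ) < P := by rw [hPdef]; positivity
    have hTn : (0:ℝ) < T^(n+2:ℕ) := by positivity
    have h2 : (T^(n+2:ℕ))⁻¹ ≤ 2^(n+2) * P⁻¹ := by
      rw [inv_le_iff_one_le_mul₀ hTn]
      calc (1:ℝ) = P * P⁻¹ := by field_simp
        _ ≤ (2^(n+2) * T^(n+2)) * P⁻¹ := mul_le_mul_of_nonneg_right hP (by positivity)
        _ = 2^(n+2) * P⁻¹ * T^(n+2) := by ring
    calc ((T^(n+2:ℕ))⁻¹)^2 ≤ (2^(n+2) * P⁻¹)^2 := pow_le_pow_left₀ (by positivity) h2 2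
      _ = 4^(n+2) * (P⁻¹)^2 := by
          rw [mul_pow, pow_right_comm]; norm_num
      _ = 4^(n+2) * (∏ i, 1/((m i:ℝ)+1)^2) * (1/((l:ℝ)+1)^2) := by
          rw [hPdef, mul_inv, mul_pow, ← Finset.prod_inv_distrib, ← Finset.prod_pow]
          simp only [inv_pow, one_div]
          ring


lemma exists_coef (n : ℕ) (s : Fin (n+1)) (m : Fin (n+1) → ℕ) (hm : 2 ≤ ∑ i, m i) :
    ∃ j, 1 ≤ ‖(m j : ℂ) - (if j = s then 1 else 0)‖ := by
  by_cases h : ∃ i, i ≠ s ∧ 1 ≤ m i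
  · obtain ⟨i, his, hi⟩ := h
    refine ⟨i, ?_⟩
    rw [if_neg his, sub_zero, Complex.norm_natCast]
    exact_mod_cast hi
  · push_neg at h
    have hsum : ∑ i, m i = m s := by
      apply Finset.sum_eq_single_of_mem s (Finset.mem_univ s)
      intro i _ his
      have := h i his; omega
    refine ⟨s, ?_⟩
    rw [if_pos rfl]
    have h2 : 2 ≤ m s := hsum ▸ hm
    have hcast : ((m s : ℂ) - 1) = ((m s - 1 : ℕ) : ℂ) := by
      push_cast [Nat.cast_sub (by omega : 1 ≤ m s)]
      ring
    rw [hcast, Complex.norm_natCast]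
    exact_mod_cast (by omega : 1 ≤ m s - 1)

lemma expr_eq (n : ℕ) (s : Fin (n+1)) (m : Fin (n+1) → ℕ) (l : ℕ) (μ : Fin (n+1) → ℂ) :
    (∑ i, ((m i : ℂ) - (if i = s then 1 else 0)) * μ i) + (l:ℂ)
      = (∑ i, (m i:ℂ) * μ i) + (l:ℂ) - μ s := by
  have h : ∑ i, ((m i : ℂ) - (if i = s then 1 else 0)) * μ i
      = ∑ i, (m i:ℂ) * μ i - μ s := by
    simp only [sub_mul, ite_mul, one_mul, zero_mul]
    rw [Finset.sum_sub_distrib, Finset.sum_ite_eq' Finset.univ s μ]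
    simp
  rw [h]
  ring


/-- The set of `μ ∈ ℂ^d` that fail the Diophantine condition
`|m·μ + l − μ_s| > C(|m| + l)^{−ν}` (for some `C, ν > 0`, all `l ∈ ℕ`, `s`, and `|m| ≥ 2`)
has Lebesgue measure zero. -/
theorem diophantine_condition_generic (d : ℕ) (hd : 1 ≤ d) :
    volume {μ : Fin d → ℂ |
      ¬ ∃ C ν : ℝ, 0 < C ∧ 0 < ν ∧
        ∀ (l : ℕ) (s : Fin d) (m : Fin d → ℕ), 2 ≤ ∑ i, m i →
          C * (((∑ i, m i : ℕ) : ℝ) + (l : ℝ)) ^ (-ν)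
            < ‖(∑ i, (m i : ℂ) * μ i) + (l : ℂ) - μ s‖} = 0 := by
  obtain ⟨n, rfl⟩ : ∃ n, d = n + 1 := ⟨d - 1, by omega⟩
  set ν : ℝ := (n:ℝ) + 2 with hν
  have hν0 : 0 < ν := by rw [hν]; positivity
  set A : ℕ → ℕ → Fin (n+1) → (Fin (n+1) → ℕ) → Set (Fin (n+1) → ℂ) := fun k l s m =>
    {μ | ‖(∑ i, (m i : ℂ) * μ i) + (l:ℂ) - μ s‖
      ≤ ((k:ℝ)+1)⁻¹ * ((((∑ i, m i : ℕ)):ℝ) + (l:ℝ)) ^ (-ν)} with hA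
  set Box : ℕ → Set (Fin (n+1) → ℂ) := fun R => {μ | ∀ i, ‖μ i‖ ≤ (R:ℝ)} with hBox
  -- the summability constant
  set g : ℕ → ℝ≥0∞ := fun q => ENNReal.ofReal (1/((q:ℝ)+1)^2) with hg
  set Sg : ℝ≥0∞ := ∑' q : ℕ, g q with hSg
  have hsumg : Summable (fun q : ℕ => 1/((q:ℝ)+1)^2) := by
    have h := Real.summable_one_div_nat_pow.mpr (le_refl 2)
    have h2 := h.comp_injective (add_left_injective 1)
    exact h2.congr (fun q => by simp [Function.comp])
  have hSgfin : Sg ≠ ⊤ := by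
    rw [hSg, hg, ← ENNReal.ofReal_tsum_of_nonneg (fun q => by positivity) hsumg]
    exact ENNReal.ofReal_ne_top
  have main : ∀ R : ℕ, volume (⋂ k : ℕ, ⋃ l : ℕ, ⋃ s : Fin (n+1), ⋃ m : Fin (n+1) → ℕ,
      ⋃ (_ : 2 ≤ ∑ i, m i), (Box R ∩ A k l s m)) = 0 := by
    intro R
    set B : ℝ≥0∞ := (ENNReal.ofReal (π * (R:ℝ)^2))^n with hB
    set E : ℝ≥0∞ := ENNReal.ofReal π * B * ENNReal.ofReal ((4:ℝ)^(n+2)) with hE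
    set K : ℝ≥0∞ := E * Sg^(n+1) * Sg * ((n+1 : ℕ) : ℝ≥0∞) with hK
    have hKfin : K ≠ ⊤ := by
      rw [hK, hE]
      refine ENNReal.mul_ne_top (ENNReal.mul_ne_top (ENNReal.mul_ne_top (ENNReal.mul_ne_top
        (ENNReal.mul_ne_top ENNReal.ofReal_ne_top (ENNReal.pow_ne_top ENNReal.ofReal_ne_top))
        ENNReal.ofReal_ne_top) (ENNReal.pow_ne_top hSgfin)) hSgfin) (ENNReal.natCast_ne_top _)
    have hbound : ∀ k : ℕ, volume (⋂ k : ℕ, ⋃ l : ℕ, ⋃ s : Fin (n+1), ⋃ m : Fin (n+1) → ℕ,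
        ⋃ (_ : 2 ≤ ∑ i, m i), (Box R ∩ A k l s m))
        ≤ ENNReal.ofReal ((((k:ℝ)+1)⁻¹)^2) * K := by
      intro k
      set X : ℝ≥0∞ := ENNReal.ofReal ((((k:ℝ)+1)⁻¹)^2) with hX
      calc volume (⋂ k : ℕ, ⋃ l : ℕ, ⋃ s : Fin (n+1), ⋃ m : Fin (n+1) → ℕ,
            ⋃ (_ : 2 ≤ ∑ i, m i), (Box R ∩ A k l s m))
          ≤ volume (⋃ l : ℕ, ⋃ s : Fin (n+1), ⋃ m : Fin (n+1) → ℕ,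
            ⋃ (_ : 2 ≤ ∑ i, m i), (Box R ∩ A k l s m)) := measure_mono (Set.iInter_subset _ k)
        _ ≤ ∑' l : ℕ, volume (⋃ s : Fin (n+1), ⋃ m : Fin (n+1) → ℕ,
            ⋃ (_ : 2 ≤ ∑ i, m i), (Box R ∩ A k l s m)) := measure_iUnion_le _
        _ ≤ ∑' l : ℕ, ∑' s : Fin (n+1), volume (⋃ m : Fin (n+1) → ℕ,
            ⋃ (_ : 2 ≤ ∑ i, m i), (Box R ∩ A k l s m)) :=
            ENNReal.tsum_le_tsum fun l => measure_iUnion_le _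
        _ ≤ ∑' l : ℕ, ∑' s : Fin (n+1), ∑' m : Fin (n+1) → ℕ,
            volume (⋃ (_ : 2 ≤ ∑ i, m i), (Box R ∩ A k l s m)) :=
            ENNReal.tsum_le_tsum fun l => ENNReal.tsum_le_tsum fun s => measure_iUnion_le _
        _ ≤ ∑' l : ℕ, ∑' s : Fin (n+1), ∑' m : Fin (n+1) → ℕ,
            ((X * E * g l) * ∏ i, g (m i)) := by
            refine ENNReal.tsum_le_tsum fun l => ENNReal.tsum_le_tsum fun s =>
              ENNReal.tsum_le_tsum fun m => ?_
            by_cases hm : 2 ≤ ∑ i, m i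
            · obtain ⟨j, hj⟩ := exists_coef n s m hm
              set T : ℝ := (((∑ i, m i : ℕ)):ℝ) + (l:ℝ) with hT
              have hT0 : 0 ≤ T := by positivity
              have hsub : (⋃ (_ : 2 ≤ ∑ i, m i), (Box R ∩ A k l s m)) ⊆
                  {μ : Fin (n+1) → ℂ | (∀ i, ‖μ i‖ ≤ (R:ℝ)) ∧
                    ‖(∑ i, ((m i : ℂ) - (if i = s then 1 else 0)) * μ i) + (l:ℂ)‖
                      ≤ ((k:ℝ)+1)⁻¹ * T ^ (-ν)} := by
                refine Set.iUnion_subset fun _ => ?_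
                rintro μ ⟨h1, h2⟩
                exact ⟨h1, by rw [expr_eq]; exact h2⟩
              refine (measure_mono hsub).trans ?_
              have hslab := volume_slab n (fun i => (m i : ℂ) - (if i = s then 1 else 0)) j hj
                ((l:ℂ)) (ε := ((k:ℝ)+1)⁻¹ * T ^ (-ν)) (R := (R:ℝ))
                (by positivity) (Nat.cast_nonneg R)
              refine hslab.trans ?_
              -- numeric bound
              have heq1 : π * (((k:ℝ)+1)⁻¹ * T ^ (-ν))^2
                  = ((((k:ℝ)+1)⁻¹)^2) * (π * (T ^ (-ν))^2) := by ring
              calc ENNReal.ofReal (π * (((k:ℝ)+1)⁻¹ * T ^ (-ν))^2) * B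
                  = X * (ENNReal.ofReal π * ENNReal.ofReal ((T ^ (-ν))^2)) * B := by
                    rw [heq1, ENNReal.ofReal_mul (by positivity),
                      ENNReal.ofReal_mul (by positivity), hX]
                _ ≤ X * (ENNReal.ofReal π * ENNReal.ofReal ((4:ℝ)^(n+2)
                      * (∏ i, 1/((m i:ℝ)+1)^2) * (1/((l:ℝ)+1)^2))) * B := by
                    have hkey : ((T ^ (-ν))^2 : ℝ) ≤ (4:ℝ)^(n+2)
                        * (∏ i, 1/((m i:ℝ)+1)^2) * (1/((l:ℝ)+1)^2) := by
                      have := key_ineq n l m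
                      rw [← hT, ← hν] at this
                      exact this
                    exact mul_le_mul_left (mul_le_mul_right
                      (mul_le_mul_right (ENNReal.ofReal_le_ofReal hkey) _) _) _
                _ = (X * E * g l) * ∏ i, g (m i) := by
                    rw [ENNReal.ofReal_mul (by positivity), ENNReal.ofReal_mul (by positivity),
                      ENNReal.ofReal_prod_of_nonneg (fun i _ => by positivity), hE, hg]
                    ring
            · have hempty : (⋃ (_ : 2 ≤ ∑ i, m i), (Box R ∩ A k l s m)) = ∅ := by
                simp [hm]
              rw [hempty]
              simp
        _ = X * K := by
            have hms : ∀ l : ℕ, ∑' m : Fin (n+1) → ℕ, ((X * E * g l) * ∏ i, g (m i))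
                = (X * E * g l) * Sg^(n+1) := by
              intro l
              rw [ENNReal.tsum_mul_left, tsum_pi_fin g (n+1), hSg]
            simp_rw [hms]
            have hss : ∀ l : ℕ, ∑' _ : Fin (n+1), (X * E * g l) * Sg^(n+1)
                = ((n+1 : ℕ) : ℝ≥0∞) * ((X * E * g l) * Sg^(n+1)) := by
              intro l
              rw [tsum_fintype, Finset.sum_const, Finset.card_univ, Fintype.card_fin,
                nsmul_eq_mul]
            simp_rw [hss]
            have hre : ∀ l : ℕ, ((n+1 : ℕ) : ℝ≥0∞) * ((X * E * g l) * Sg^(n+1))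
                = (((n+1 : ℕ) : ℝ≥0∞) * X * E * Sg^(n+1)) * g l := fun l => by ring
            simp_rw [hre]
            rw [ENNReal.tsum_mul_left, ← hSg, hK]
            ring
    -- conclude from the bound
    have htend : Tendsto (fun k : ℕ => ENNReal.ofReal ((((k:ℝ)+1)⁻¹)^2) * K) atTop (𝓝 0) := by
      have h1 : Tendsto (fun k : ℕ => (((k:ℝ)+1)⁻¹)^2) atTop (𝓝 0) := by
        have h0 : Tendsto (fun k : ℕ => ((k:ℝ)+1)⁻¹) atTop (𝓝 0) := by
          simpa only [one_div] using tendsto_one_div_add_atTop_nhds_zero_nat (𝕜 := ℝ)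
        simpa using h0.pow 2
      have h2 : Tendsto (fun k : ℕ => ENNReal.ofReal ((((k:ℝ)+1)⁻¹)^2)) atTop (𝓝 0) := by
        simpa using (ENNReal.tendsto_ofReal h1)
      simpa using ENNReal.Tendsto.mul_const h2 (Or.inr hKfin)
    have hle := ge_of_tendsto' htend hbound
    exact le_antisymm hle zero_le
  refine measure_mono_null ?_ (measure_iUnion_null (fun R : ℕ => main R))
  intro μ hμ
  simp only [Set.mem_setOf_eq] at hμ
  push_neg at hμ
  set R : ℕ := ⌈∑ i, ‖μ i‖⌉₊ with hR
  refine Set.mem_iUnion.mpr ⟨R, Set.mem_iInter.mpr fun k => ?_⟩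
  obtain ⟨l, s, m, hm, hle⟩ := hμ (((k:ℝ)+1)⁻¹) ν (by positivity) hν0
  refine Set.mem_iUnion.mpr ⟨l, Set.mem_iUnion.mpr ⟨s, Set.mem_iUnion.mpr ⟨m,
    Set.mem_iUnion.mpr ⟨hm, ⟨?_, ?_⟩⟩⟩⟩⟩
  · intro i
    calc ‖μ i‖ ≤ ∑ i, ‖μ i‖ :=
          Finset.single_le_sum (f := fun i => ‖μ i‖)
            (fun i _ => norm_nonneg _) (Finset.mem_univ i)
      _ ≤ (R:ℝ) := Nat.le_ceil _
  · exact hle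
end

section
/- Let m, n, φ₂, C ∈ ℝ. Define h : (−1, 1) → ℝ by h(x) = m[√(1 − x²)·arcsin(x) − x] − n + φ₂ x + C√(1 − x²). Then h is differentiable on (−1, 1) and satisfies (x² − 1) h'(x) − x h(x) = m x² + n x − φ₂ for all x ∈ (−1, 1). (This exhibits the general solution of the equation h₂' + (a/(x−1) + b/(x+1))h₂ = (f − φ₂)/(x² − 1) in the resonant case a = b = −1/2 with f(x) = m x² + n x, multiplied through by x² − 1; note that for a = b = −1/2, a/(x−1) + a/(x+1) = −x/(x² − 1).) -/
/-- In the resonant case `a = b = −1/2` with `f(x) = m x² + n x`, the function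
`h(x) = m[√(1−x²)·arcsin x − x] − n + φ₂ x + C √(1−x²)` is differentiable on `(−1,1)` and
satisfies `(x² − 1) h'(x) − x h(x) = m x² + n x − φ₂` there. -/
theorem resonant_general_solution (m n φ₂ C : ℝ) :
    ∀ x ∈ Set.Ioo (-1 : ℝ) 1,
      DifferentiableAt ℝ
          (fun t : ℝ =>
            m * (Real.sqrt (1 - t ^ 2) * Real.arcsin t - t) - n + φ₂ * t
              + C * Real.sqrt (1 - t ^ 2)) x
        ∧ (x ^ 2 - 1)
              * deriv (fun t : ℝ =>
                  m * (Real.sqrt (1 - t ^ 2) * Real.arcsin t - t) - n + φ₂ * t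
                    + C * Real.sqrt (1 - t ^ 2)) x
            - x * (m * (Real.sqrt (1 - x ^ 2) * Real.arcsin x - x) - n + φ₂ * x
                    + C * Real.sqrt (1 - x ^ 2))
          = m * x ^ 2 + n * x - φ₂ := by
  intro x hx
  obtain ⟨hx1, hx2⟩ := hx
  have hne1 : x ≠ 1 := ne_of_lt hx2
  have hnem1 : x ≠ -1 := ne_of_gt hx1
  have hpos : (0:ℝ) < 1 - x ^ 2 := by nlinarith
  set s := Real.sqrt (1 - x ^ 2) with hs
  have hs2 : s ^ 2 = 1 - x ^ 2 := Real.sq_sqrt hpos.le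
  have hspos : 0 < s := Real.sqrt_pos.2 hpos
  have hs0 : s ≠ 0 := hspos.ne'
  -- derivative of inner polynomial
  have hinner : HasDerivAt (fun t : ℝ => 1 - t ^ 2) (-(2 * x)) x := by
    simpa using ((hasDerivAt_pow 2 x).const_sub 1)
  have hsqrt : HasDerivAt (fun t : ℝ => Real.sqrt (1 - t ^ 2)) (-x / s) x := by
    have h := (Real.hasDerivAt_sqrt hpos.ne').comp x hinner
    refine h.congr_deriv ?_
    field_simp
    ring
  have harcsin : HasDerivAt Real.arcsin (1 / s) x :=
    Real.hasDerivAt_arcsin hnem1 hne1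
  have hprod : HasDerivAt (fun t : ℝ => Real.sqrt (1 - t ^ 2) * Real.arcsin t)
      ((-x / s) * Real.arcsin x + s * (1 / s)) x := hsqrt.mul harcsin
  have hD : HasDerivAt (fun t : ℝ =>
        m * (Real.sqrt (1 - t ^ 2) * Real.arcsin t - t) - n + φ₂ * t
          + C * Real.sqrt (1 - t ^ 2))
      (m * ((-x / s) * Real.arcsin x + s * (1 / s) - 1) + φ₂ * 1 + C * (-x / s)) x := by
    exact (((((hprod.sub (hasDerivAt_id x)).const_mul m).sub_const n).add
      ((hasDerivAt_id x).const_mul φ₂)).add (hsqrt.const_mul C))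
  refine ⟨hD.differentiableAt, ?_⟩
  rw [hD.deriv]
  field_simp
  linear_combination (-(m * x * Real.arcsin x) - C * x) * hs2
end

section
/- Let m, n ∈ ℂ with m ≠ 0. Then there exist no φ₂ ∈ ℂ, no open set U ⊆ ℂ containing the segment [−1, 1], and no analytic function h : U → ℂ such that (x² − 1) h'(x) − x h(x) = m x² + n x − φ₂ for all x ∈ U. (That is, in the resonant case a = b = −1/2, when m ≠ 0 no correction constant φ₂ makes the order-2 linearization coefficient single-valued and analytic at both singular points x = 1 and x = −1: existence of corrections fails.) -/
open Set intervalIntegral Real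

/-- In the resonant case `a = b = −1/2`, when `m ≠ 0` there is no correction constant `φ₂`
for which the equation `(x² − 1) h'(x) − x h(x) = m x² + n x − φ₂` has a solution `h`
analytic on an open set containing the segment `[−1, 1]`: existence of corrections fails. -/
theorem resonant_no_correction (m n : ℂ) (hm : m ≠ 0) :
    ¬ ∃ (φ₂ : ℂ) (U : Set ℂ) (h : ℂ → ℂ),
        IsOpen U ∧ (Complex.ofReal '' Set.Icc (-1 : ℝ) 1) ⊆ U ∧
        AnalyticOnNhd ℂ h U ∧
        ∀ x ∈ U, (x ^ 2 - 1) * deriv h x - x * h x = m * x ^ 2 + n * x - φ₂ := by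
  rintro ⟨φ₂, U, h, hUo, hsub, hA, heq⟩
  set H1 := deriv h with hH1
  have hA1 : AnalyticOnNhd ℂ H1 U := hA.deriv
  set H2 := deriv H1 with hH2
  have hA2 : AnalyticOnNhd ℂ H2 U := hA1.deriv
  set H3 := deriv H2 with hH3
  -- first differentiation of the ODE
  have key1 : ∀ x ∈ U, (x ^ 2 - 1) * H2 x + x * H1 x - h x = 2 * m * x + n := by
    intro x hx
    have hd0 : HasDerivAt h (H1 x) x := ((hA x hx).differentiableAt).hasDerivAt
    have hd1 : HasDerivAt H1 (H2 x) x := ((hA1 x hx).differentiableAt).hasDerivAt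
    have h2 : HasDerivAt (fun y : ℂ => y ^ 2 - 1) (2 * x) x := by
      simpa using ((hasDerivAt_pow 2 x).sub_const 1)
    have hL : HasDerivAt (fun y => (y ^ 2 - 1) * H1 y - y * h y)
        ((2 * x) * H1 x + (x ^ 2 - 1) * H2 x - (1 * h x + x * H1 x)) x :=
      (h2.mul hd1).sub ((hasDerivAt_id x).mul hd0)
    have hR : HasDerivAt (fun y : ℂ => m * y ^ 2 + n * y - φ₂)
        (m * (2 * x ^ 1) + n * 1) x :=
      (((hasDerivAt_pow 2 x).const_mul m).add ((hasDerivAt_id x).const_mul n)).sub_const φ₂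
    have hEe : (fun y => (y ^ 2 - 1) * H1 y - y * h y) =ᶠ[nhds x]
        (fun y : ℂ => m * y ^ 2 + n * y - φ₂) :=
      Filter.eventuallyEq_of_mem (hUo.mem_nhds hx) (fun y hy => heq y hy)
    have hder : (2 * x) * H1 x + (x ^ 2 - 1) * H2 x - (1 * h x + x * H1 x)
        = m * (2 * x ^ 1) + n * 1 := by
      rw [← hL.deriv, ← hR.deriv]; exact hEe.deriv_eq
    linear_combination hder
  -- second differentiation
  have key2 : ∀ x ∈ U, (x ^ 2 - 1) * H3 x + 3 * x * H2 x = 2 * m := by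
    intro x hx
    have hd0 : HasDerivAt h (H1 x) x := ((hA x hx).differentiableAt).hasDerivAt
    have hd1 : HasDerivAt H1 (H2 x) x := ((hA1 x hx).differentiableAt).hasDerivAt
    have hd2 : HasDerivAt H2 (H3 x) x := ((hA2 x hx).differentiableAt).hasDerivAt
    have h2 : HasDerivAt (fun y : ℂ => y ^ 2 - 1) (2 * x) x := by
      simpa using ((hasDerivAt_pow 2 x).sub_const 1)
    have hL : HasDerivAt (fun y => (y ^ 2 - 1) * H2 y + y * H1 y - h y)
        ((2 * x) * H2 x + (x ^ 2 - 1) * H3 x + (1 * H1 x + x * H2 x) - H1 x) x :=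
      ((h2.mul hd2).add ((hasDerivAt_id x).mul hd1)).sub hd0
    have hR : HasDerivAt (fun y : ℂ => 2 * m * y + n) (2 * m * 1) x := by
      simpa using (((hasDerivAt_id x).const_mul (2 * m)).add_const n)
    have hEe : (fun y => (y ^ 2 - 1) * H2 y + y * H1 y - h y) =ᶠ[nhds x]
        (fun y : ℂ => 2 * m * y + n) :=
      Filter.eventuallyEq_of_mem (hUo.mem_nhds hx) (fun y hy => key1 y hy)
    have hder : (2 * x) * H2 x + (x ^ 2 - 1) * H3 x + (1 * H1 x + x * H2 x) - H1 x
        = 2 * m * 1 := by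
      rw [← hL.deriv, ← hR.deriv]; exact hEe.deriv_eq
    linear_combination hder
  -- membership of the real segment
  have hmem : ∀ t ∈ Icc (-1 : ℝ) 1, ((t : ℂ)) ∈ U := fun t ht => hsub ⟨t, ht, rfl⟩
  -- the auxiliary function
  set F : ℝ → ℂ := fun t => (-((1 - t ^ 2) * Real.sqrt (1 - t ^ 2))) • H2 (t : ℂ) with hF
  have hFderiv : ∀ t ∈ Ioo (-1 : ℝ) 1,
      HasDerivAt F ((2 * Real.sqrt (1 - t ^ 2)) • m) t := by
    intro t ht
    have htU : ((t : ℂ)) ∈ U := hmem t (Ioo_subset_Icc_self ht)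
    have hpos : (0 : ℝ) < 1 - t ^ 2 := by nlinarith [ht.1, ht.2]
    have hs : Real.sqrt (1 - t ^ 2) > 0 := Real.sqrt_pos.2 hpos
    have hin : HasDerivAt (fun u : ℝ => 1 - u ^ 2) (-(2 * t)) t := by
      simpa using ((hasDerivAt_pow 2 t).const_sub 1)
    have hsq : HasDerivAt (fun u : ℝ => Real.sqrt (1 - u ^ 2))
        (1 / (2 * Real.sqrt (1 - t ^ 2)) * (-(2 * t))) t :=
      (Real.hasDerivAt_sqrt hpos.ne').comp t hin
    have hc : HasDerivAt (fun u : ℝ => -((1 - u ^ 2) * Real.sqrt (1 - u ^ 2)))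
        (-((-(2 * t)) * Real.sqrt (1 - t ^ 2)
          + (1 - t ^ 2) * (1 / (2 * Real.sqrt (1 - t ^ 2)) * (-(2 * t))))) t :=
      (hin.mul hsq).neg
    have hc' : -((-(2 * t)) * Real.sqrt (1 - t ^ 2)
          + (1 - t ^ 2) * (1 / (2 * Real.sqrt (1 - t ^ 2)) * (-(2 * t))))
        = 3 * t * Real.sqrt (1 - t ^ 2) := by
      have h1 : Real.sqrt (1 - t ^ 2) * Real.sqrt (1 - t ^ 2) = 1 - t ^ 2 :=
        Real.mul_self_sqrt hpos.le
      field_simp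
      linear_combination (-t) * h1
    rw [hc'] at hc
    have hG : HasDerivAt (fun u : ℝ => H2 (u : ℂ)) (H3 (t : ℂ)) t :=
      (((hA2 _ htU).differentiableAt).hasDerivAt).comp_ofReal
    have := hc.smul hG
    refine this.congr_deriv (Eq.symm ?_)
    have hk := key2 _ htU
    have h1 : ((Real.sqrt (1 - t ^ 2) : ℝ) : ℂ) * ((Real.sqrt (1 - t ^ 2) : ℝ) : ℂ)
        = 1 - (t : ℂ) ^ 2 := by
      rw [← Complex.ofReal_mul, Real.mul_self_sqrt hpos.le]; push_cast; ring
    simp only [Complex.real_smul]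
    push_cast
    linear_combination (-(Real.sqrt (1 - t ^ 2) : ℂ)) * hk
  have hFcont : ContinuousOn F (Icc (-1 : ℝ) 1) := by
    refine ContinuousOn.smul (f := fun u : ℝ => -((1 - u ^ 2) * Real.sqrt (1 - u ^ 2))) (g := fun u : ℝ => H2 (u : ℂ)) ?_ ?_
    · exact (Continuous.neg ((by continuity : Continuous fun u : ℝ => 1 - u ^ 2).mul
        ((Real.continuous_sqrt).comp (by continuity)))).continuousOn
    · intro t ht
      exact (((hA2 _ (hmem t ht)).continuousAt).comp
        (Complex.continuous_ofReal.continuousAt)).continuousWithinAt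
  have hint : IntervalIntegrable (fun t : ℝ => (2 * Real.sqrt (1 - t ^ 2)) • m)
      MeasureTheory.volume (-1 : ℝ) 1 := by
    apply Continuous.intervalIntegrable
    exact ((continuous_const.mul ((Real.continuous_sqrt).comp (by continuity)))).smul
      continuous_const
  have hFTC := intervalIntegral.integral_eq_sub_of_hasDerivAt_of_le (by norm_num)
    hFcont hFderiv hint
  have hF1 : F 1 = 0 := by simp [hF]
  have hFm1 : F (-1) = 0 := by simp [hF]
  rw [hF1, hFm1, sub_zero] at hFTC
  rw [intervalIntegral.integral_smul_const] at hFTC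
  have hval : (∫ t in (-1 : ℝ)..1, 2 * Real.sqrt (1 - t ^ 2)) = π := by
    rw [intervalIntegral.integral_const_mul, integral_sqrt_one_sub_sq]; ring
  rw [hval] at hFTC
  exact (smul_ne_zero Real.pi_ne_zero hm) hFTC
end
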